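/- For every integer $n \ge 4$, the number of semimagic quad squares using cards from the EvenQuads-$2^n$ deck equals $2^n(2^n-1)(2^n-2)(2^n-4)(2^n-8)$ times the number of semimagic quad squares of type C over the same deck. -/

import Mathlib

/-- A card in the EvenQuads-`2^n` deck, modeled as a vector in `(ℤ/2)^n`. -/
abbrev Deck (n : ℕ) := Fin n → ZMod 2

/-- Identification of the integer `k` (via binary representation) with a card. -/
def numToCard (n k : ℕ) : Deck n := fun i => if Nat.testBit k i.val then 1 else 0

/-- A quad square is semimagic if every row and every column sums to zero. -/
def IsSemimagic {n : ℕ} (M : Fin 4 × Fin 4 → Deck n) : Prop :=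
  (∀ i : Fin 4, ∑ j : Fin 4, M (i, j) = 0) ∧ (∀ j : Fin 4, ∑ i : Fin 4, M (i, j) = 0)

/-- A quad square is magic if it is semimagic and both diagonals sum to zero. -/
def IsMagic {n : ℕ} (M : Fin 4 × Fin 4 → Deck n) : Prop :=
  IsSemimagic M ∧ (∑ i : Fin 4, M (i, i) = 0) ∧ (∑ i : Fin 4, M (i, 3 - i) = 0)

/-- Identification of `Fin 4` with `(ℤ/2)^2` via binary representation. -/
def finToVec (a : Fin 4) : Fin 2 → ZMod 2 := fun i => if Nat.testBit a.val i.val then 1 else 0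

/-- A grid position as an element of `(ℤ/2)^2 × (ℤ/2)^2 ≅ (ℤ/2)^4`. -/
def posVec (p : Fin 4 × Fin 4) : (Fin 2 → ZMod 2) × (Fin 2 → ZMod 2) :=
  (finToVec p.1, finToVec p.2)

/-- A quad square is strongly magic if any four pairwise distinct positions summing to
zero in `(ℤ/2)^4` carry cards summing to zero. -/
def IsStronglyMagic {n : ℕ} (M : Fin 4 × Fin 4 → Deck n) : Prop :=
  ∀ p1 p2 p3 p4 : Fin 4 × Fin 4,
    p1 ≠ p2 → p1 ≠ p3 → p1 ≠ p4 → p2 ≠ p3 → p2 ≠ p4 → p3 ≠ p4 →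
    posVec p1 + posVec p2 + posVec p3 + posVec p4 = 0 →
    M p1 + M p2 + M p3 + M p4 = 0

/-- A quad square is of type C if its first row is `0,1,2,3` and
its first column is `0,4,8,12`. -/
def IsTypeC {n : ℕ} (M : Fin 4 × Fin 4 → Deck n) : Prop :=
  (∀ j : Fin 4, M (0, j) = numToCard n j.val) ∧
  (∀ i : Fin 4, M (i, 0) = numToCard n (4 * i.val))

namespace SemimagicCountAux

/-! ### Generic linear algebra: automorphism moving one independent family to another -/

lemma exists_linearEquiv_of_li {K V : Type*} [Field K] [AddCommGroup V] [Module K V]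
    [FiniteDimensional K V] {k : ℕ} {v w : Fin k → V}
    (hv : LinearIndependent K v) (hw : LinearIndependent K w) :
    ∃ L : V ≃ₗ[K] V, ∀ i, L (v i) = w i := by
  classical
  set f : (Fin k →₀ K) →ₗ[K] V := Finsupp.linearCombination K v with hfdef
  set g : (Fin k →₀ K) →ₗ[K] V := Finsupp.linearCombination K w with hgdef
  have hf : Function.Injective f := hv
  have hg : Function.Injective g := hw
  obtain ⟨q, hq⟩ := Submodule.exists_isCompl (LinearMap.range f)
  obtain ⟨q', hq'⟩ := Submodule.exists_isCompl (LinearMap.range g)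
  have hrank : Module.finrank K (LinearMap.range f) = Module.finrank K (LinearMap.range g) := by
    rw [LinearMap.finrank_range_of_inj hf, LinearMap.finrank_range_of_inj hg]
  have hrank2 : Module.finrank K q = Module.finrank K q' := by
    have h1 := Submodule.finrank_add_eq_of_isCompl hq
    have h2 := Submodule.finrank_add_eq_of_isCompl hq'
    omega
  let e1 : LinearMap.range f ≃ₗ[K] LinearMap.range g :=
    (LinearEquiv.ofInjective f hf).symm ≪≫ₗ LinearEquiv.ofInjective g hg
  let e2 : q ≃ₗ[K] q' := LinearEquiv.ofFinrankEq _ _ hrank2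
  refine ⟨((Submodule.prodEquivOfIsCompl _ _ hq).symm ≪≫ₗ (e1.prodCongr e2)) ≪≫ₗ
      Submodule.prodEquivOfIsCompl _ _ hq', fun i => ?_⟩
  have hv_mem : v i ∈ LinearMap.range f :=
    ⟨Finsupp.single i 1, by simp [f, Finsupp.linearCombination_single]⟩
  have step1 : (Submodule.prodEquivOfIsCompl _ _ hq).symm (v i) =
      ((⟨v i, hv_mem⟩ : LinearMap.range f), 0) :=
    Submodule.prodEquivOfIsCompl_symm_apply_left _ _ hq (⟨v i, hv_mem⟩ : LinearMap.range f)
  have step2 : e1 ⟨v i, hv_mem⟩ =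
      ⟨w i, ⟨Finsupp.single i 1, by simp [g, Finsupp.linearCombination_single]⟩⟩ := by
    have : (⟨v i, hv_mem⟩ : LinearMap.range f)
        = LinearEquiv.ofInjective f hf (Finsupp.single i 1) := by
      ext; simp [LinearEquiv.ofInjective_apply, f, Finsupp.linearCombination_single]
    rw [show e1 ⟨v i, hv_mem⟩
        = LinearEquiv.ofInjective g hg ((LinearEquiv.ofInjective f hf).symm ⟨v i, hv_mem⟩) from rfl,
      this, LinearEquiv.symm_apply_apply]
    ext; simp [LinearEquiv.ofInjective_apply, g, Finsupp.linearCombination_single]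
  simp only [LinearEquiv.trans_apply, step1, LinearEquiv.prodCongr_apply]
  rw [Submodule.coe_prodEquivOfIsCompl']
  simp [step2]

/-! ### Characteristic two helpers -/

variable {n : ℕ}

lemma add_self (v : Deck n) : v + v = 0 := by
  have h : ∀ a : ZMod 2, a + a = 0 := by decide
  exact funext fun i => h (v i)

lemma two_eq_zero : (2 : Deck n) = 0 := by
  have : (2 : Deck n) = 1 + 1 := by norm_num
  rw [this]; exact add_self 1

lemma add_eq_zero_iff {v w : Deck n} : v + w = 0 ↔ v = w :=
  ⟨fun h => by linear_combination h - w * two_eq_zero, fun h => h ▸ add_self w⟩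

/-! ### numToCard lemmas -/

def eV (n : ℕ) (i : Fin 4) : Deck n := numToCard n (2 ^ (i : ℕ))

lemma eV_eq (hn : 4 ≤ n) (i : Fin 4) : eV n i = Pi.single (Fin.castLE hn i) 1 := by
  ext j
  simp only [eV, numToCard, Nat.testBit_two_pow]
  by_cases h : (i : ℕ) = (j : ℕ)
  · have h2 : Fin.castLE hn i = j := Fin.ext h
    subst h2
    rw [if_pos (by simpa using h), Pi.single_eq_same (M := fun _ : Fin n => ZMod 2)]
  · have h2 : j ≠ Fin.castLE hn i := fun hh => h (by simpa using (congrArg Fin.val hh).symm)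
    simp [h, Pi.single_eq_of_ne h2]

lemma eV_li (hn : 4 ≤ n) : LinearIndependent (ZMod 2) (eV n) := by
  have h : eV n = (Pi.basisFun (ZMod 2) (Fin n)) ∘ (Fin.castLE hn) := by
    funext i; rw [Function.comp_apply, Pi.basisFun_apply, eV_eq hn]
  rw [h]
  exact (Pi.basisFun (ZMod 2) (Fin n)).linearIndependent.comp _ (Fin.castLE_injective hn)

lemma numToCard_zero : numToCard n 0 = 0 := funext fun j => by simp [numToCard]

lemma numToCard_xor (a b : ℕ) : numToCard n (a ^^^ b) = numToCard n a + numToCard n b := by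
  funext j
  show (if Nat.testBit (a ^^^ b) j then (1 : ZMod 2) else 0) = _
  rw [Nat.testBit_xor]
  cases ha : a.testBit j.val <;> cases hb : b.testBit j.val <;>
    simp [numToCard, ha, hb] <;> decide

lemma numToCard_one : numToCard n 1 = eV n 0 := rfl
lemma numToCard_two : numToCard n 2 = eV n 1 := rfl
lemma numToCard_four : numToCard n 4 = eV n 2 := rfl
lemma numToCard_eight : numToCard n 8 = eV n 3 := rfl
lemma numToCard_three : numToCard n 3 = eV n 0 + eV n 1 := by
  have h := numToCard_xor (n := n) 1 2
  rw [show (1:ℕ) ^^^ 2 = 3 from rfl] at h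
  rw [h, numToCard_one, numToCard_two]
lemma numToCard_twelve : numToCard n 12 = eV n 2 + eV n 3 := by
  have h := numToCard_xor (n := n) 4 8
  rw [show (4:ℕ) ^^^ 8 = 12 from rfl] at h
  rw [h, numToCard_four, numToCard_eight]

/-! ### The parameter map and its independence -/

/-- The parameter vector of a square. -/
def rcv (M : Fin 4 × Fin 4 → Deck n) : Fin 4 → Deck n :=
  ![M (0,0) + M (0,1), M (0,0) + M (0,2), M (0,0) + M (1,0), M (0,0) + M (2,0)]

lemma rcv_li {M : Fin 4 × Fin 4 → Deck n} (hI : Function.Injective M)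
    (hS : IsSemimagic M) : LinearIndependent (ZMod 2) (rcv M) := by
  have hr := hS.1 0
  have hc := hS.2 0
  rw [Fin.sum_univ_four] at hr hc
  have htwo : (2 : Deck n) = 0 := two_eq_zero
  rw [Fintype.linearIndependent_iff]
  intro g hg
  rw [Fin.sum_univ_four] at hg
  have e0 : rcv M 0 = M (0,0) + M (0,1) := rfl
  have e1 : rcv M 1 = M (0,0) + M (0,2) := rfl
  have e2 : rcv M 2 = M (0,0) + M (1,0) := rfl
  have e3 : rcv M 3 = M (0,0) + M (2,0) := rfl
  rw [e0, e1, e2, e3] at hg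
  have hz : ∀ a : ZMod 2, a = 0 ∨ a = 1 := by decide
  have key : ∀ p q : Fin 4 × Fin 4, p ≠ q → ¬ (M p + M q = 0) :=
    fun p q hpq h => hpq (hI (add_eq_zero_iff.mp h))
  rcases hz (g 0) with h0 | h0 <;> rcases hz (g 1) with h1 | h1 <;>
    rcases hz (g 2) with h2 | h2 <;> rcases hz (g 3) with h3 | h3 <;>
    rw [h0, h1, h2, h3] at hg <;>
    simp only [zero_smul, one_smul, add_zero, zero_add] at hg
  · intro i; fin_cases i <;> assumption
  · exact absurd (key (0,0) (2,0) (by decide) (by linear_combination hg)) not_false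
  · exact absurd (key (0,0) (1,0) (by decide) (by linear_combination hg)) not_false
  · exact absurd (key (1,0) (2,0) (by decide)
      (by linear_combination hg - M (0,0) * htwo)) not_false
  · exact absurd (key (0,0) (0,2) (by decide) (by linear_combination hg)) not_false
  · exact absurd (key (0,2) (2,0) (by decide)
      (by linear_combination hg - M (0,0) * htwo)) not_false
  · exact absurd (key (0,2) (1,0) (by decide)
      (by linear_combination hg - M (0,0) * htwo)) not_false
  · exact absurd (key (0,2) (3,0) (by decide)
      (by linear_combination hg + hc - M (0,0) * htwo
        - (M (0,0) + M (1,0) + M (2,0)) * htwo)) not_false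
  · exact absurd (key (0,0) (0,1) (by decide) (by linear_combination hg)) not_false
  · exact absurd (key (0,1) (2,0) (by decide)
      (by linear_combination hg - M (0,0) * htwo)) not_false
  · exact absurd (key (0,1) (1,0) (by decide)
      (by linear_combination hg - M (0,0) * htwo)) not_false
  · exact absurd (key (0,1) (3,0) (by decide)
      (by linear_combination hg + hc - M (0,0) * htwo
        - (M (0,0) + M (1,0) + M (2,0)) * htwo)) not_false
  · exact absurd (key (0,1) (0,2) (by decide)
      (by linear_combination hg - M (0,0) * htwo)) not_false
  · exact absurd (key (0,3) (2,0) (by decide)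
      (by linear_combination hg + hr - M (0,0) * htwo
        - (M (0,0) + M (0,1) + M (0,2)) * htwo)) not_false
  · exact absurd (key (0,3) (1,0) (by decide)
      (by linear_combination hg + hr - M (0,0) * htwo
        - (M (0,0) + M (0,1) + M (0,2)) * htwo)) not_false
  · exact absurd (key (0,3) (3,0) (by decide)
      (by linear_combination hg + hr + hc - M (0,0) * htwo
        - (2*M (0,0) + M (0,1) + M (0,2) + M (1,0) + M (2,0)) * htwo)) not_false

/-! ### Affine transformations of squares -/

lemma aff_inj {M : Fin 4 × Fin 4 → Deck n} (hM : Function.Injective M) (c : Deck n)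
    (L : Deck n ≃ₗ[ZMod 2] Deck n) : Function.Injective (fun p => c + L (M p)) :=
  fun p q h => hM (L.injective (add_left_cancel h))

lemma aff_sm {M : Fin 4 × Fin 4 → Deck n} (hS : IsSemimagic M) (c : Deck n)
    (L : Deck n ≃ₗ[ZMod 2] Deck n) : IsSemimagic (fun p => c + L (M p)) := by
  refine ⟨fun i => ?_, fun j => ?_⟩
  · have h := hS.1 i
    rw [Fin.sum_univ_four] at h ⊢
    show (c + L (M (i,0))) + (c + L (M (i,1))) + (c + L (M (i,2))) + (c + L (M (i,3))) = 0
    have hL : L (M (i,0)) + L (M (i,1)) + L (M (i,2)) + L (M (i,3)) = 0 := by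
      rw [← map_add, ← map_add, ← map_add, h, map_zero]
    linear_combination hL + (2*c) * two_eq_zero
  · have h := hS.2 j
    rw [Fin.sum_univ_four] at h ⊢
    show (c + L (M (0,j))) + (c + L (M (1,j))) + (c + L (M (2,j))) + (c + L (M (3,j))) = 0
    have hL : L (M (0,j)) + L (M (1,j)) + L (M (2,j)) + L (M (3,j)) = 0 := by
      rw [← map_add, ← map_add, ← map_add, h, map_zero]
    linear_combination hL + (2*c) * two_eq_zero

/-! ### The main structures -/

abbrev SM (n : ℕ) := {M : Fin 4 × Fin 4 → Deck n // Function.Injective M ∧ IsSemimagic M}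
abbrev TC (n : ℕ) :=
  {M : Fin 4 × Fin 4 → Deck n // Function.Injective M ∧ IsSemimagic M ∧ IsTypeC M}
abbrev Par (n : ℕ) := (Deck n) × {x : Fin 4 → Deck n // LinearIndependent (ZMod 2) x}

def Phi (s : SM n) : Par n := (s.1 (0,0), ⟨rcv s.1, rcv_li s.2.1 s.2.2⟩)

/-- The fiber of `Phi` over any parameter is equivalent to the set of type C squares. -/
noncomputable def fiberEquiv (hn : 4 ≤ n) (t : Par n) :
    {s : SM n // Phi s = t} ≃ TC n := by
  obtain ⟨c, x, hx⟩ := t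
  let L := (exists_linearEquiv_of_li (eV_li hn) hx).choose
  have hL : ∀ i, L (eV n i) = x i := (exists_linearEquiv_of_li (eV_li hn) hx).choose_spec
  refine
    { toFun := fun s => ⟨fun p => L.symm (s.1.1 p + c), ?_⟩
      invFun := fun M => ⟨⟨fun p => c + L (M.1 p), ?_⟩, ?_⟩
      left_inv := ?_
      right_inv := ?_ }
  · -- forward map lands in TC
    obtain ⟨⟨N, hNI, hNS⟩, hfib⟩ := s
    have h00 : N (0,0) = c := congrArg Prod.fst hfib
    have hrc : rcv N = x := congrArg (fun z : Par n => (z.2 : {x // _}).1) hfib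
    have h01 : N (0,1) = c + x 0 := by
      have h := congrFun hrc 0; rw [show rcv N 0 = N (0,0) + N (0,1) from rfl, h00] at h
      linear_combination h - c * two_eq_zero
    have h02 : N (0,2) = c + x 1 := by
      have h := congrFun hrc 1; rw [show rcv N 1 = N (0,0) + N (0,2) from rfl, h00] at h
      linear_combination h - c * two_eq_zero
    have h10 : N (1,0) = c + x 2 := by
      have h := congrFun hrc 2; rw [show rcv N 2 = N (0,0) + N (1,0) from rfl, h00] at h
      linear_combination h - c * two_eq_zero
    have h20 : N (2,0) = c + x 3 := by
      have h := congrFun hrc 3; rw [show rcv N 3 = N (0,0) + N (2,0) from rfl, h00] at h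
      linear_combination h - c * two_eq_zero
    have hr := hNS.1 0
    have hcc := hNS.2 0
    rw [Fin.sum_univ_four] at hr hcc
    have h03 : N (0,3) = c + x 0 + x 1 := by
      linear_combination hr - h00 - h01 - h02 - (2*c + x 0 + x 1) * two_eq_zero
    have h30 : N (3,0) = c + x 2 + x 3 := by
      linear_combination hcc - h00 - h10 - h20 - (2*c + x 2 + x 3) * two_eq_zero
    have hform : (fun p => L.symm (N p + c)) = fun p => (L.symm c) + L.symm (N p) :=
      funext fun p => by rw [map_add, add_comm]
    refine ⟨?_, ?_, ?_, ?_⟩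
    · rw [hform]; exact aff_inj hNI _ L.symm
    · rw [hform]; exact aff_sm hNS _ L.symm
    · -- first row
      intro j
      fin_cases j
      · show L.symm (N (0,0) + c) = numToCard n 0
        rw [h00, add_self, map_zero, numToCard_zero]
      · show L.symm (N (0,1) + c) = numToCard n 1
        have hy : N (0,1) + c = x 0 := by linear_combination h01 + c * two_eq_zero
        rw [hy, numToCard_one, LinearEquiv.symm_apply_eq, hL 0]
      · show L.symm (N (0,2) + c) = numToCard n 2
        have hy : N (0,2) + c = x 1 := by linear_combination h02 + c * two_eq_zero
        rw [hy, numToCard_two, LinearEquiv.symm_apply_eq, hL 1]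
      · show L.symm (N (0,3) + c) = numToCard n 3
        have hy : N (0,3) + c = x 0 + x 1 := by linear_combination h03 + c * two_eq_zero
        rw [hy, numToCard_three, LinearEquiv.symm_apply_eq, map_add, hL 0, hL 1]
    · -- first column
      intro i
      fin_cases i
      · show L.symm (N (0,0) + c) = numToCard n (4 * 0)
        rw [h00, add_self, map_zero, show (4*0 : ℕ) = 0 from rfl, numToCard_zero]
      · show L.symm (N (1,0) + c) = numToCard n (4 * 1)
        have hy : N (1,0) + c = x 2 := by linear_combination h10 + c * two_eq_zero
        rw [hy, show (4*1 : ℕ) = 4 from rfl, numToCard_four, LinearEquiv.symm_apply_eq, hL 2]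
      · show L.symm (N (2,0) + c) = numToCard n (4 * 2)
        have hy : N (2,0) + c = x 3 := by linear_combination h20 + c * two_eq_zero
        rw [hy, show (4*2 : ℕ) = 8 from rfl, numToCard_eight, LinearEquiv.symm_apply_eq, hL 3]
      · show L.symm (N (3,0) + c) = numToCard n (4 * 3)
        have hy : N (3,0) + c = x 2 + x 3 := by linear_combination h30 + c * two_eq_zero
        rw [hy, show (4*3 : ℕ) = 12 from rfl, numToCard_twelve,
          LinearEquiv.symm_apply_eq, map_add, hL 2, hL 3]
  · -- inverse map : injective and semimagic
    exact ⟨aff_inj M.2.1 c L, aff_sm M.2.2.1 c L⟩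
  · -- inverse map is in the fiber
    obtain ⟨M, hMI, hMS, hMT⟩ := M
    have m00 : M (0,0) = 0 := by rw [hMT.1 0]; exact numToCard_zero
    have m01 : M (0,1) = eV n 0 := by rw [hMT.1 1]; exact numToCard_one
    have m02 : M (0,2) = eV n 1 := by rw [hMT.1 2]; exact numToCard_two
    have m10 : M (1,0) = eV n 2 := by rw [hMT.2 1]; exact numToCard_four
    have m20 : M (2,0) = eV n 3 := by rw [hMT.2 2]; exact numToCard_eight
    have hfst : (fun p => c + L (M p)) (0,0) = c := by
      show c + L (M (0,0)) = c; rw [m00, map_zero, add_zero]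
    refine Prod.ext hfst (Subtype.ext ?_)
    show rcv (fun p => c + L (M p)) = x
    funext i
    fin_cases i
    · show (c + L (M (0,0))) + (c + L (M (0,1))) = x 0
      rw [m00, m01, map_zero, hL 0]
      linear_combination c * two_eq_zero
    · show (c + L (M (0,0))) + (c + L (M (0,2))) = x 1
      rw [m00, m02, map_zero, hL 1]
      linear_combination c * two_eq_zero
    · show (c + L (M (0,0))) + (c + L (M (1,0))) = x 2
      rw [m00, m10, map_zero, hL 2]
      linear_combination c * two_eq_zero
    · show (c + L (M (0,0))) + (c + L (M (2,0))) = x 3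
      rw [m00, m20, map_zero, hL 3]
      linear_combination c * two_eq_zero
  · -- left inverse
    intro s
    refine Subtype.ext (Subtype.ext (funext fun p => ?_))
    show c + L (L.symm (s.1.1 p + c)) = s.1.1 p
    rw [L.apply_symm_apply]
    linear_combination c * two_eq_zero
  · -- right inverse
    intro M
    refine Subtype.ext (funext fun p => ?_)
    show L.symm ((c + L (M.1 p)) + c) = M.1 p
    have : (c + L (M.1 p)) + c = L (M.1 p) := by linear_combination c * two_eq_zero
    rw [this, L.symm_apply_apply]

end SemimagicCountAux

open SemimagicCountAux

theorem semimagic_count_eq_factor_mul_typeC (n : ℕ) (hn : 4 ≤ n) :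
    (Nat.card {M : Fin 4 × Fin 4 → Deck n // Function.Injective M ∧ IsSemimagic M} : ℤ) =
      2 ^ n * (2 ^ n - 1) * (2 ^ n - 2) * (2 ^ n - 4) * (2 ^ n - 8) *
        (Nat.card {M : Fin 4 × Fin 4 → Deck n //
          Function.Injective M ∧ IsSemimagic M ∧ IsTypeC M} : ℤ) := by
  classical
  have hmain : Nat.card (SM n) = Nat.card (Par n) * Nat.card (TC n) := by
    have e : SM n ≃ Par n × TC n :=
      ((Equiv.sigmaFiberEquiv (Phi (n := n))).symm.trans
        (Equiv.sigmaCongrRight (fun t => fiberEquiv hn t))).trans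
        (Equiv.sigmaEquivProd _ _)
    rw [Nat.card_congr e, Nat.card_prod]
  have hdeck : Nat.card (Deck n) = 2 ^ n := by simp [Nat.card_pi]
  have hfr : Module.finrank (ZMod 2) (Deck n) = n := Module.finrank_fin_fun _
  have hli : Nat.card {x : Fin 4 → Deck n // LinearIndependent (ZMod 2) x} =
      (2^n - 1) * (2^n - 2) * (2^n - 4) * (2^n - 8) := by
    have h2 := card_linearIndependent (K := ZMod 2) (V := Deck n) (k := 4)
      (by rw [hfr]; exact hn)
    rw [hfr, ZMod.card, Fin.prod_univ_four] at h2
    rw [show ((0:Fin 4):ℕ) = 0 from rfl, show ((1:Fin 4):ℕ) = 1 from rfl,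
      show ((2:Fin 4):ℕ) = 2 from rfl, show ((3:Fin 4):ℕ) = 3 from rfl] at h2
    rw [h2]
    norm_num
  have hpar : Nat.card (Par n) = 2^n * ((2^n - 1) * (2^n - 2) * (2^n - 4) * (2^n - 8)) := by
    rw [Nat.card_prod, hdeck, hli]
  have h16 : (16:ℕ) ≤ 2 ^ n :=
    le_trans (by norm_num) (Nat.pow_le_pow_right (by norm_num) hn)
  have hfin : (Nat.card (SM n) : ℤ) =
      2 ^ n * (2 ^ n - 1) * (2 ^ n - 2) * (2 ^ n - 4) * (2 ^ n - 8) * (Nat.card (TC n) : ℤ) := by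
    rw [hmain, hpar]
    push_cast [Nat.cast_sub (show (1:ℕ) ≤ 2^n by omega),
      Nat.cast_sub (show (2:ℕ) ≤ 2^n by omega),
      Nat.cast_sub (show (4:ℕ) ≤ 2^n by omega),
      Nat.cast_sub (show (8:ℕ) ≤ 2^n by omega)]
    ring
  exact hfin
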